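/- arXiv:1307.6705 — 10 statements merged into one kernel-verified Lean document; each statement's English description precedes it below -/
import Mathlib

section
/- Let g : ℂ → ℂ be differentiable, let A(z) = α₁·z + α₂ with α₁ ≠ 0, and let h(z) = γ·g(A(z)) with γ ≠ 0. For a parameter λ ∈ ℂ, define the Kim fixed-point operator of a differentiable function f by O_f(z) = y − ((1 + λ·u²)/(1 − 2u))·f(y)/f′(z), where y = z − f(z)/f′(z) and u = f(y)/f(z). Then for every z ∈ ℂ such that all quantities involved are defined (i.e. g(z) ≠ 0, g′(z) ≠ 0, g(y_g) denominators and 1 − 2u_g ≠ 0 for the computation of O_g(z), and likewise for O_h at A⁻¹(z)), one has A(O_h(A⁻¹(z))) = O_g(z); that is, O_g and O_h are affine conjugated by A. -/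
/-- Kim's fixed-point operator (with η = μ = 0, parameter `lam`) applied to a
function `f`: `O_f(z) = y − ((1 + λu²)/(1 − 2u))·f(y)/f′(z)` where
`y = z − f(z)/f′(z)` and `u = f(y)/f(z)`. -/
noncomputable def kimOp (lam : ℂ) (f : ℂ → ℂ) (z : ℂ) : ℂ :=
  let y := z - f z / deriv f z
  let u := f y / f z
  y - ((1 + lam * u ^ 2) / (1 - 2 * u)) * (f y / deriv f z)

/-- Scaling theorem: Kim's operators on `g` and on `h = γ·(g ∘ A)` are affine
conjugated by the affine map `A(z) = α₁z + α₂`. -/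
theorem kim_scaling (lam : ℂ) (g : ℂ → ℂ) (hg : Differentiable ℂ g)
    (α₁ α₂ γ : ℂ) (hα : α₁ ≠ 0) (hγ : γ ≠ 0)
    (A : ℂ → ℂ) (hA : ∀ z, A z = α₁ * z + α₂)
    (Ainv : ℂ → ℂ) (hAinv : ∀ z, Ainv z = (z - α₂) / α₁)
    (h : ℂ → ℂ) (hh : ∀ z, h z = γ * g (A z))
    (z : ℂ)
    (hgz : g z ≠ 0) (hg'z : deriv g z ≠ 0)
    (hgu : 1 - 2 * (g (z - g z / deriv g z) / g z) ≠ 0)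
    (hhz : h (Ainv z) ≠ 0) (hh'z : deriv h (Ainv z) ≠ 0)
    (hhu : 1 - 2 * (h (Ainv z - h (Ainv z) / deriv h (Ainv z)) / h (Ainv z)) ≠ 0) :
    A (kimOp lam h (Ainv z)) = kimOp lam g z := by
  have hfun : h = fun w => γ * g (α₁ * w + α₂) := funext fun w => by rw [hh, hA]
  have hAinvz : A (Ainv z) = z := by rw [hAinv, hA]; field_simp; ring
  have hderiv : ∀ w, deriv h w = γ * α₁ * deriv g (A w) := by
    intro w
    have h1 : HasDerivAt (fun w => α₁ * w + α₂) α₁ w := by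
      simpa using ((hasDerivAt_id w).const_mul α₁).add_const α₂
    have h2 : HasDerivAt g (deriv g (α₁ * w + α₂)) (α₁ * w + α₂) := (hg _).hasDerivAt
    have h3 := (h2.comp w h1).const_mul γ
    rw [hfun, hA]
    have := h3.deriv
    simp only [Function.comp] at this
    rw [this]; ring
  have hhAinv : h (Ainv z) = γ * g z := by rw [hh, hAinvz]
  have hd' : deriv h (Ainv z) = γ * α₁ * deriv g z := by rw [hderiv, hAinvz]
  have hratio : h (Ainv z) / deriv h (Ainv z) = g z / (α₁ * deriv g z) := by
    rw [hhAinv, hd']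
    field_simp
  have hAy : A (Ainv z - h (Ainv z) / deriv h (Ainv z)) = z - g z / deriv g z := by
    rw [hratio, hA, hAinv]
    field_simp
    ring
  have hhy : h (Ainv z - h (Ainv z) / deriv h (Ainv z))
      = γ * g (z - g z / deriv g z) := by rw [hh, hAy]
  simp only [kimOp]
  rw [hhy, hhAinv, hd']
  have hu : γ * g (z - g z / deriv g z) / (γ * g z) = g (z - g z / deriv g z) / g z := by
    field_simp
  have hr2 : γ * g z / (γ * α₁ * deriv g z) = g z / (α₁ * deriv g z) := by
    field_simp
  rw [hu, hr2, hA, hAinv]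
  set u := g (z - g z / deriv g z) / g z with hudef
  set gy := g (z - g z / deriv g z)
  set C := (1 + lam * u ^ 2) / (1 - 2 * u) with hC
  have : α₁ * ((z - α₂) / α₁ - g z / (α₁ * deriv g z) -
      C * (γ * gy / (γ * α₁ * deriv g z))) + α₂
      = z - g z / deriv g z - C * (gy / deriv g z) := by
    field_simp
    ring
  exact this
end

section
/- Let a, b ∈ ℂ with a ≠ b, let p(z) = (z − a)(z − b), and let M(u) = (u − a)/(u − b) be the Möbius map with inverse M⁻¹(u) = (u·b − a)/(u − 1). Let K_p denote the Kim fixed-point operator with parameter λ applied to p, i.e. K_p(z) = y − ((1 + λ·u²)/(1 − 2u))·p(y)/p′(z) with y = z − p(z)/p′(z) and u = p(y)/p(z). Then for every z ∈ ℂ for which all the intermediate expressions are defined (all relevant denominators nonzero, including −1 − 4z − 6z² − 4z³ + (λ−1)z⁴ ≠ 0), one has M(K_p(M⁻¹(z))) = −z⁴·((1−λ) + 4z + 6z² + 4z³ + z⁴)/(−1 − 4z − 6z² − 4z³ + (λ−1)z⁴). -/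
lemma kimOp_eq (lam : ℂ) (f : ℂ → ℂ) (z : ℂ) :
    kimOp lam f z = (z - f z / deriv f z) -
      ((1 + lam * (f (z - f z / deriv f z) / f z) ^ 2) /
        (1 - 2 * (f (z - f z / deriv f z) / f z))) *
        (f (z - f z / deriv f z) / deriv f z) := rfl

set_option maxHeartbeats 2000000 in
/-- Möbius conjugation of Kim's operator on the quadratic `p(z) = (z−a)(z−b)`
yields the rational map
`O_p(z,λ) = −z⁴((1−λ)+4z+6z²+4z³+z⁴)/(−1−4z−6z²−4z³+(λ−1)z⁴)`. -/

theorem kim_moebius_conjugation (lam a b : ℂ) (hab : a ≠ b)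
    (p : ℂ → ℂ) (hp : ∀ u, p u = (u - a) * (u - b))
    (M : ℂ → ℂ) (hM : ∀ u, M u = (u - a) / (u - b))
    (Minv : ℂ → ℂ) (hMinv : ∀ u, Minv u = (u * b - a) / (u - 1))
    (z : ℂ) (hz1 : z - 1 ≠ 0)
    (hpz : p (Minv z) ≠ 0) (hp' : deriv p (Minv z) ≠ 0)
    (hu : 1 - 2 * (p (Minv z - p (Minv z) / deriv p (Minv z)) / p (Minv z)) ≠ 0)
    (hKb : kimOp lam p (Minv z) - b ≠ 0)
    (hden : -1 - 4 * z - 6 * z ^ 2 - 4 * z ^ 3 + (lam - 1) * z ^ 4 ≠ 0) :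
    M (kimOp lam p (Minv z)) =
      -z ^ 4 * ((1 - lam) + 4 * z + 6 * z ^ 2 + 4 * z ^ 3 + z ^ 4) /
        (-1 - 4 * z - 6 * z ^ 2 - 4 * z ^ 3 + (lam - 1) * z ^ 4) := by
  have hba : b - a ≠ 0 := sub_ne_zero.mpr (Ne.symm hab)
  have hpf : p = fun u => (u - a) * (u - b) := funext hp
  subst hpf
  have hd : ∀ u : ℂ, deriv (fun u : ℂ => (u - a) * (u - b)) u = (u - a) + (u - b) := by
    intro u
    have h1 : HasDerivAt (fun u : ℂ => (u - a) * (u - b)) (1 * (u - b) + (u - a) * 1) u :=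
      ((hasDerivAt_id u).sub_const a).mul ((hasDerivAt_id u).sub_const b)
    rw [h1.deriv]; ring
  set w := Minv z with hw
  have hwv : w = (z * b - a) / (z - 1) := hMinv z
  have hwa : w - a = z * (b - a) / (z - 1) := by rw [hwv]; field_simp; ring
  have hwb : w - b = (b - a) / (z - 1) := by rw [hwv]; field_simp; ring
  have hdw : deriv (fun u : ℂ => (u - a) * (u - b)) w = (z + 1) * (b - a) / (z - 1) := by
    rw [hd, hwa, hwb]; field_simp
  have hz2 : z + 1 ≠ 0 := by
    intro h
    apply hp'
    rw [hdw, h]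
    simp
  have hfw : (fun u : ℂ => (u - a) * (u - b)) w = z * (b - a) ^ 2 / (z - 1) ^ 2 := by
    show (w - a) * (w - b) = _
    rw [hwa, hwb]; field_simp
  set Y := w - (fun u : ℂ => (u - a) * (u - b)) w / deriv (fun u : ℂ => (u - a) * (u - b)) w
    with hY
  have hYa : Y - a = z ^ 2 * (b - a) / ((z - 1) * (z + 1)) := by
    rw [hY, hfw, hdw, sub_right_comm, hwa]
    field_simp
    ring
  have hYb : Y - b = (b - a) / ((z - 1) * (z + 1)) := by
    rw [hY, hfw, hdw, sub_right_comm, hwb]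
    field_simp
    ring
  have hfY : (fun u : ℂ => (u - a) * (u - b)) Y = z ^ 2 * (b - a) ^ 2 / ((z - 1) ^ 2 * (z + 1) ^ 2) := by
    show (Y - a) * (Y - b) = _
    rw [hYa, hYb]; field_simp
  have huval : (fun u : ℂ => (u - a) * (u - b)) Y / (fun u : ℂ => (u - a) * (u - b)) w
      = z / (z + 1) ^ 2 := by
    rw [hfY, hfw]
    rcases eq_or_ne z 0 with hz0 | hz0
    · simp [hz0]
    · field_simp
  have hz2sq : z ^ 2 + 1 ≠ 0 := by
    intro h
    apply hu
    rw [huval]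
    have : 1 - 2 * (z / (z + 1) ^ 2) = (z ^ 2 + 1) / (z + 1) ^ 2 := by
      field_simp; ring
    rw [this, h]
    simp
  have h12 : 1 - 2 * (z / (z + 1) ^ 2) = (z ^ 2 + 1) / (z + 1) ^ 2 := by
    field_simp; ring
  have hQ : (1 + lam * (z / (z + 1) ^ 2) ^ 2) / ((z ^ 2 + 1) / (z + 1) ^ 2) *
      (z ^ 2 * (b - a) / ((z - 1) * (z + 1)) * ((b - a) / ((z - 1) * (z + 1))) /
        ((z + 1) * (b - a) / (z - 1))) =
      z ^ 2 * (b - a) * ((z + 1) ^ 4 + lam * z ^ 2) / ((z - 1) * (z + 1) ^ 5 * (z ^ 2 + 1)) := by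
    have e1 : z ^ 2 * (b - a) / ((z - 1) * (z + 1)) * ((b - a) / ((z - 1) * (z + 1))) /
        ((z + 1) * (b - a) / (z - 1)) = z ^ 2 * (b - a) / ((z - 1) * (z + 1) ^ 3) := by
      rw [div_div_eq_mul_div]
      field_simp [hz1, hz2, hba]
    have e2 : (1 + lam * (z / (z + 1) ^ 2) ^ 2) / ((z ^ 2 + 1) / (z + 1) ^ 2) =
        ((z + 1) ^ 4 + lam * z ^ 2) / ((z + 1) ^ 2 * (z ^ 2 + 1)) := by
      rw [div_div_eq_mul_div]
      field_simp [hz2, hz2sq]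
    rw [e1, e2, div_mul_div_comm]
    field_simp [hz1, hz2, hz2sq, hba]
  have hKa2 : kimOp lam (fun u : ℂ => (u - a) * (u - b)) w - a
      = z ^ 4 * (b - a) * ((z + 1) ^ 4 - lam) / ((z - 1) * (z + 1) ^ 5 * (z ^ 2 + 1)) := by
    rw [kimOp_eq, ← hY, huval, hdw, h12, hYa, hYb, sub_right_comm, hYa, hQ]
    field_simp [hz1, hz2, hz2sq, hba]
    ring
  have hKb2 : kimOp lam (fun u : ℂ => (u - a) * (u - b)) w - b
      = (b - a) * ((z + 1) ^ 4 - lam * z ^ 4) / ((z - 1) * (z + 1) ^ 5 * (z ^ 2 + 1)) := by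
    rw [kimOp_eq, ← hY, huval, hdw, h12, hYa, hYb, sub_right_comm, hYb, hQ]
    field_simp [hz1, hz2, hz2sq, hba]
    ring
  have hden' : (z + 1) ^ 4 - lam * z ^ 4 ≠ 0 := by
    intro h; apply hden; linear_combination -h
  rw [hM, hKa2, hKb2]
  rw [div_div_div_eq]
  rw [div_eq_div_iff (mul_ne_zero (mul_ne_zero (mul_ne_zero hz1 (pow_ne_zero _ hz2)) hz2sq) (mul_ne_zero hba hden')) hden]
  ring
end

section
/- For every λ ∈ ℂ with λ ≠ 16, the complex derivative of the map z ↦ O_p(z,λ) at z = 1 equals 64/(16 − λ). -/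
/-- The rational operator of Kim's family (η = μ = 0, parameter `lam`) on
quadratic polynomials, after Möbius conjugation:
`O_p(z,λ) = −z⁴((1−λ)+4z+6z²+4z³+z⁴)/(−1−4z−6z²−4z³+(λ−1)z⁴)`. -/
noncomputable def Op (lam z : ℂ) : ℂ :=
  -z ^ 4 * ((1 - lam) + 4 * z + 6 * z ^ 2 + 4 * z ^ 3 + z ^ 4) /
    (-1 - 4 * z - 6 * z ^ 2 - 4 * z ^ 3 + (lam - 1) * z ^ 4)
/-- For `λ ≠ 16`, the derivative of `O_p(·,λ)` at `z = 1` equals `64/(16 − λ)`. -/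
theorem deriv_Op_at_one (lam : ℂ) (hlam : lam ≠ 16) :
    deriv (fun z => Op lam z) 1 = 64 / (16 - lam) := by
  have hD : (-1 - 4 * (1:ℂ) - 6 * 1 ^ 2 - 4 * 1 ^ 3 + (lam - 1) * 1 ^ 4) = lam - 16 := by ring
  have hDne : (-1 - 4 * (1:ℂ) - 6 * 1 ^ 2 - 4 * 1 ^ 3 + (lam - 1) * 1 ^ 4) ≠ 0 := by
    rw [hD]; intro h; apply hlam; linear_combination h
  have hz : HasDerivAt (fun z : ℂ => z) 1 1 := hasDerivAt_id 1
  have hN : HasDerivAt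
      (fun z : ℂ => -z ^ 4 * ((1 - lam) + 4 * z + 6 * z ^ 2 + 4 * z ^ 3 + z ^ 4))
      (4 * lam - 96) 1 := by
    have h1 : HasDerivAt (fun z : ℂ => -z ^ 4) (-4) 1 := by
      have := (hasDerivAt_pow 4 (1:ℂ)).neg
      refine this.congr_deriv ?_
      norm_num
    have h2 : HasDerivAt (fun z : ℂ => (1 - lam) + 4 * z + 6 * z ^ 2 + 4 * z ^ 3 + z ^ 4)
        32 1 := by
      have := (((((hasDerivAt_const (1:ℂ) (1 - lam)).add
        ((hz.const_mul 4))).add ((hasDerivAt_pow 2 (1:ℂ)).const_mul 6)).add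
        ((hasDerivAt_pow 3 (1:ℂ)).const_mul 4)).add (hasDerivAt_pow 4 (1:ℂ)))
      refine this.congr_deriv ?_
      norm_num
    have := h1.mul h2
    refine this.congr_deriv ?_
    ring
  have hDen : HasDerivAt
      (fun z : ℂ => -1 - 4 * z - 6 * z ^ 2 - 4 * z ^ 3 + (lam - 1) * z ^ 4)
      (4 * lam - 32) 1 := by
    have := (((((hasDerivAt_const (1:ℂ) (-1)).sub (hz.const_mul 4)).sub
      ((hasDerivAt_pow 2 (1:ℂ)).const_mul 6)).sub
      ((hasDerivAt_pow 3 (1:ℂ)).const_mul 4)).add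
      ((hasDerivAt_pow 4 (1:ℂ)).const_mul (lam - 1)))
    refine this.congr_deriv ?_
    norm_num
    ring
  have h := hN.div hDen hDne
  have heq : (fun z => Op lam z) = fun z : ℂ =>
      -z ^ 4 * ((1 - lam) + 4 * z + 6 * z ^ 2 + 4 * z ^ 3 + z ^ 4) /
        (-1 - 4 * z - 6 * z ^ 2 - 4 * z ^ 3 + (lam - 1) * z ^ 4) := by
    funext z; rfl
  rw [heq]; erw [h.deriv]; rw [hD]
  have h16 : lam - 16 ≠ 0 := fun h => hlam (by linear_combination h)
  have h16' : (16:ℂ) - lam ≠ 0 := fun h => hlam (by linear_combination -h)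
  field_simp
  ring
end

section
/- If λ ∈ ℂ satisfies |λ − 16| > 64, then the strange fixed point z = 1 of O_p(·,λ) is an attractor but not a superattractor: the complex derivative of z ↦ O_p(z,λ) at z = 1 has modulus strictly less than 1 and is nonzero. -/
lemma hasDerivAt_Op_one (lam : ℂ) (h : lam - 16 ≠ 0) :
    HasDerivAt (fun z => Op lam z) (-64 / (lam - 16)) 1 := by
  have hN : HasDerivAt
      (fun z : ℂ => -z ^ 4 * ((1 - lam) + 4 * z + 6 * z ^ 2 + 4 * z ^ 3 + z ^ 4))
      (4 * lam - 96) 1 := by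
    have hin := (((((hasDerivAt_id (1:ℂ)).const_mul 4).const_add (1 - lam)).add
        ((hasDerivAt_pow 2 (1:ℂ)).const_mul 6)).add
        ((hasDerivAt_pow 3 (1:ℂ)).const_mul 4)).add (hasDerivAt_pow 4 (1:ℂ))
    have h2 := (hasDerivAt_pow 4 (1:ℂ)).neg.mul hin
    refine h2.congr_deriv ?_
    push_cast
    norm_num
    ring
  have hD : HasDerivAt
      (fun z : ℂ => -1 - 4 * z - 6 * z ^ 2 - 4 * z ^ 3 + (lam - 1) * z ^ 4)
      (4 * lam - 32) 1 := by
    have h2 := ((((hasDerivAt_const (1:ℂ) (-1)).sub ((hasDerivAt_id (1:ℂ)).const_mul 4)).sub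
        ((hasDerivAt_pow 2 (1:ℂ)).const_mul 6)).sub
        ((hasDerivAt_pow 3 (1:ℂ)).const_mul 4)).add
        ((hasDerivAt_pow 4 (1:ℂ)).const_mul (lam - 1))
    refine h2.congr_deriv ?_
    push_cast
    norm_num
    ring
  have hD1 : (-1 - 4 * 1 - 6 * 1 ^ 2 - 4 * 1 ^ 3 + (lam - 1) * 1 ^ 4 : ℂ) = lam - 16 := by
    ring
  have hne : (-1 - 4 * 1 - 6 * 1 ^ 2 - 4 * 1 ^ 3 + (lam - 1) * 1 ^ 4 : ℂ) ≠ 0 := by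
    rw [hD1]; exact h
  have := hN.div hD hne
  unfold Op
  refine this.congr_deriv ?_
  rw [hD1]
  field_simp
  ring

/-- If `|λ − 16| > 64` then `z = 1` is an attracting but not superattracting
fixed point of `O_p(·,λ)`. -/
theorem one_attractor (lam : ℂ) (hlam : ‖lam - 16‖ > 64) :
    ‖deriv (fun z => Op lam z) 1‖ < 1 ∧
      deriv (fun z => Op lam z) 1 ≠ 0 := by
  have hne : lam - 16 ≠ 0 := by
    intro h0
    simp [h0] at hlam
    linarith
  have hd := (hasDerivAt_Op_one lam hne).deriv
  rw [hd]
  constructor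
  · rw [norm_div]
    have hpos : (0:ℝ) < ‖lam - 16‖ := by positivity
    rw [div_lt_one hpos]
    simpa using hlam
  · exact div_ne_zero (by norm_num) hne
end

section
/- If λ ∈ ℂ satisfies |λ − 16| = 64, then the strange fixed point z = 1 of O_p(·,λ) is parabolic (neutral): the complex derivative of z ↦ O_p(z,λ) at z = 1 has modulus exactly 1. -/
/-- If `|λ − 16| = 64` then `z = 1` is a parabolic (neutral) fixed point of
`O_p(·,λ)`. -/
theorem one_parabolic (lam : ℂ) (hlam : ‖lam - 16‖ = 64) :
    ‖deriv (fun z => Op lam z) 1‖ = 1 := by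
  have hl : lam - 16 ≠ 0 := by
    intro h
    rw [h] at hlam
    simp at hlam
  have hid : HasDerivAt (fun z : ℂ => z) 1 1 := hasDerivAt_id 1
  have h2 : HasDerivAt (fun z : ℂ => z ^ 2) 2 1 := by
    simpa using hasDerivAt_pow 2 (1 : ℂ)
  have h3 : HasDerivAt (fun z : ℂ => z ^ 3) 3 1 := by
    simpa using hasDerivAt_pow 3 (1 : ℂ)
  have h4 : HasDerivAt (fun z : ℂ => z ^ 4) 4 1 := by
    simpa using hasDerivAt_pow 4 (1 : ℂ)
  have hN : HasDerivAt
      (fun z : ℂ => -z ^ 4 * ((1 - lam) + 4 * z + 6 * z ^ 2 + 4 * z ^ 3 + z ^ 4))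
      ((-4) * ((1 - lam) + 4 + 6 + 4 + 1) + (-1) * (4 + 12 + 12 + 4)) 1 := by
    have hg : HasDerivAt
        (fun z : ℂ => (1 - lam) + 4 * z + 6 * z ^ 2 + 4 * z ^ 3 + z ^ 4)
        (4 + 12 + 12 + 4) 1 := by
      have := ((((hasDerivAt_const (1 : ℂ) (1 - lam)).fun_add
        (hid.const_mul 4)).fun_add (h2.const_mul 6)).fun_add (h3.const_mul 4)).fun_add h4
      exact this.congr_deriv (by ring)
    have hf : HasDerivAt (fun z : ℂ => -z ^ 4) (-4) 1 := by simpa using h4.fun_neg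
    have := hf.fun_mul hg
    exact this.congr_deriv (by norm_num)
  have hD : HasDerivAt
      (fun z : ℂ => -1 - 4 * z - 6 * z ^ 2 - 4 * z ^ 3 + (lam - 1) * z ^ 4)
      (-4 - 12 - 12 + (lam - 1) * 4) 1 := by
    have := ((((hasDerivAt_const (1 : ℂ) (-1 : ℂ)).fun_sub
      (hid.const_mul 4)).fun_sub (h2.const_mul 6)).fun_sub (h3.const_mul 4)).fun_add
      (h4.const_mul (lam - 1))
    exact this.congr_deriv (by ring)
  have hD1 : (-1 - 4 * (1:ℂ) - 6 * 1 ^ 2 - 4 * 1 ^ 3 + (lam - 1) * 1 ^ 4) ≠ 0 := by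
    intro h
    apply hl
    linear_combination h
  have hdiv := hN.fun_div hD hD1
  have heq : deriv (fun z => Op lam z) 1 = -64 / (lam - 16) := by
    rw [show (fun z => Op lam z) = fun z : ℂ =>
        (-z ^ 4 * ((1 - lam) + 4 * z + 6 * z ^ 2 + 4 * z ^ 3 + z ^ 4)) /
        (-1 - 4 * z - 6 * z ^ 2 - 4 * z ^ 3 + (lam - 1) * z ^ 4) from rfl]
    rw [hdiv.deriv, div_eq_div_iff (pow_ne_zero 2 hD1) hl]
    ring
  rw [heq, norm_div, hlam]
  have : ‖(-64 : ℂ)‖ = 64 := by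
    rw [norm_neg]
    norm_num
  rw [this]
  norm_num
end

section
/- If λ ∈ ℂ satisfies |λ − 16| < 64 and λ ≠ 16, then the strange fixed point z = 1 of O_p(·,λ) is a repulsor: the complex derivative of z ↦ O_p(z,λ) at z = 1 has modulus strictly greater than 1. -/
/-- If `|λ − 16| < 64` and `λ ≠ 16` then `z = 1` is a repelling fixed point of
`O_p(·,λ)`. -/
theorem one_repulsor (lam : ℂ) (hlam : ‖lam - 16‖ < 64)
    (hlam16 : lam ≠ 16) :
    ‖deriv (fun z => Op lam z) 1‖ > 1 := by
  have hsub : lam - 16 ≠ 0 := sub_ne_zero.mpr hlam16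
  have h1 : HasDerivAt (fun z : ℂ => z) 1 1 := hasDerivAt_id 1
  have hN : HasDerivAt
      (fun z : ℂ => -z ^ 4 * ((1 - lam) + 4 * z + 6 * z ^ 2 + 4 * z ^ 3 + z ^ 4))
      (4 * lam - 96) 1 := by
    have h := ((h1.pow 4).neg.mul
      ((((hasDerivAt_const (1:ℂ) (1 - lam)).add (h1.const_mul 4)).add
        ((h1.pow 2).const_mul 6)).add
        (((h1.pow 3).const_mul 4).add (h1.pow 4))))
    convert h.congr_deriv ?_ using 2
    · rfl
    · rfl
    all_goals simp only [Pi.add_apply, Pi.mul_apply, Pi.neg_apply, Pi.pow_apply]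
    all_goals ring
  have hD : HasDerivAt
      (fun z : ℂ => -1 - 4 * z - 6 * z ^ 2 - 4 * z ^ 3 + (lam - 1) * z ^ 4)
      (4 * lam - 32) 1 := by
    have h := ((((hasDerivAt_const (1:ℂ) (-1 : ℂ)).sub (h1.const_mul 4)).sub
      ((h1.pow 2).const_mul 6)).sub ((h1.pow 3).const_mul 4)).add
      ((h1.pow 4).const_mul (lam - 1))
    refine h.congr_deriv ?_
    ring
  have hD1 : (-1 - 4 * (1:ℂ) - 6 * 1 ^ 2 - 4 * 1 ^ 3 + (lam - 1) * 1 ^ 4) ≠ 0 := by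
    have : (-1 - 4 * (1:ℂ) - 6 * 1 ^ 2 - 4 * 1 ^ 3 + (lam - 1) * 1 ^ 4) = lam - 16 := by
      ring
    rw [this]; exact hsub
  have hdiv := hN.div hD hD1
  have hval : ((4 * lam - 96) * (-1 - 4 * (1:ℂ) - 6 * 1 ^ 2 - 4 * 1 ^ 3 + (lam - 1) * 1 ^ 4)
      - (-(1:ℂ) ^ 4 * ((1 - lam) + 4 * 1 + 6 * 1 ^ 2 + 4 * 1 ^ 3 + 1 ^ 4)) * (4 * lam - 32))
      / (-1 - 4 * (1:ℂ) - 6 * 1 ^ 2 - 4 * 1 ^ 3 + (lam - 1) * 1 ^ 4) ^ 2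
      = -64 / (lam - 16) := by
    rw [div_eq_div_iff (pow_ne_zero 2 hD1) hsub]
    ring
  have hOp : HasDerivAt (fun z => Op lam z) (-64 / (lam - 16)) 1 := by
    rw [← hval]
    simpa [Op, Pi.div_def] using hdiv
  rw [hOp.deriv]
  rw [norm_div]
  rw [gt_iff_lt, lt_div_iff₀ (norm_pos_iff.mpr hsub)]
  simpa using hlam
end

section
/- For λ = 1, the set of free critical points of O_p(·,1) is {−1, −1/2 + (√3/2)·i, −1/2 − (√3/2)·i}: for z₀ ∈ ℂ with z₀ ≠ 0 and (1+2z₀)(1+2z₀+2z₀²) ≠ 0, the complex derivative of z ↦ O_p(z,1) at z₀ equals 0 if and only if z₀ ∈ {−1, −1/2 + (√3/2)·i, −1/2 − (√3/2)·i}. -/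
/-- For `λ = 1`, the free critical points of `O_p(·,1)` are
`−1`, `−1/2 + (√3/2)i` and `−1/2 − (√3/2)i`. -/
theorem free_critical_points_lam_one (z₀ : ℂ) (hz₀ : z₀ ≠ 0)
    (hden : (1 + 2 * z₀) * (1 + 2 * z₀ + 2 * z₀ ^ 2) ≠ 0) :
    deriv (fun z => Op 1 z) z₀ = 0 ↔
      z₀ = -1 ∨ z₀ = -(1 / 2) + ((Real.sqrt 3 : ℝ) / 2 : ℝ) * Complex.I ∨
        z₀ = -(1 / 2) - ((Real.sqrt 3 : ℝ) / 2 : ℝ) * Complex.I := by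
  set r₁ : ℂ := -(1 / 2) + ((Real.sqrt 3 : ℝ) / 2 : ℝ) * Complex.I with hr₁
  set r₂ : ℂ := -(1 / 2) - ((Real.sqrt 3 : ℝ) / 2 : ℝ) * Complex.I with hr₂
  have hs : ((Real.sqrt 3 : ℝ) : ℂ) ^ 2 = 3 := by
    norm_cast
    exact Real.sq_sqrt (by norm_num)
  have hg : (-1 - 4 * z₀ - 6 * z₀ ^ 2 - 4 * z₀ ^ 3 + ((1:ℂ) - 1) * z₀ ^ 4) ≠ 0 := by
    intro h
    exact hden (by linear_combination -h)
  -- derivatives of numerator and denominator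
  have h1 : HasDerivAt (fun z : ℂ => z) 1 z₀ := hasDerivAt_id' z₀
  have h2 := hasDerivAt_pow 2 z₀
  have h3 := hasDerivAt_pow 3 z₀
  have h4 := hasDerivAt_pow 4 z₀
  have hnum : HasDerivAt
      (fun z : ℂ => -z ^ 4 * ((1 - 1) + 4 * z + 6 * z ^ 2 + 4 * z ^ 3 + z ^ 4))
      (-(20 * z₀ ^ 4 + 36 * z₀ ^ 5 + 28 * z₀ ^ 6 + 8 * z₀ ^ 7)) z₀ := by
    have hA : HasDerivAt (fun z : ℂ => (1 - 1) + 4 * z + 6 * z ^ 2 + 4 * z ^ 3 + z ^ 4)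
        ((0 + 4 * 1 + 6 * (↑2 * z₀ ^ 1) + 4 * (↑3 * z₀ ^ 2)) + ↑4 * z₀ ^ 3) z₀ :=
      ((((hasDerivAt_const z₀ ((1:ℂ) - 1)).add (h1.const_mul 4)).add
        (h2.const_mul 6)).add (h3.const_mul 4)).add h4
    have := h4.neg.mul hA
    refine this.congr_deriv ?_
    simp only [Pi.neg_apply]
    push_cast
    ring
  have hdenD : HasDerivAt
      (fun z : ℂ => -1 - 4 * z - 6 * z ^ 2 - 4 * z ^ 3 + ((1:ℂ) - 1) * z ^ 4)
      (-(4 + 12 * z₀ + 12 * z₀ ^ 2)) z₀ := by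
    have : HasDerivAt
        (fun z : ℂ => -1 - 4 * z - 6 * z ^ 2 - 4 * z ^ 3 + ((1:ℂ) - 1) * z ^ 4)
        ((((0 - 4 * 1) - 6 * (↑2 * z₀ ^ 1)) - 4 * (↑3 * z₀ ^ 2)) +
          ((1:ℂ) - 1) * (↑4 * z₀ ^ 3)) z₀ :=
      ((((hasDerivAt_const z₀ (-1:ℂ)).sub (h1.const_mul 4)).sub
        (h2.const_mul 6)).sub (h3.const_mul 4)).add (h4.const_mul ((1:ℂ) - 1))
    convert this using 1
    ring
  have hdiv := hnum.div hdenD hg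
  have key : deriv (fun z => Op 1 z) z₀ =
      20 * z₀ ^ 4 * (1 + z₀) ^ 4 * ((z₀ - r₁) * (z₀ - r₂)) /
        (-1 - 4 * z₀ - 6 * z₀ ^ 2 - 4 * z₀ ^ 3 + ((1:ℂ) - 1) * z₀ ^ 4) ^ 2 := by
    have := hdiv.deriv
    simp only [Op]
    refine this.trans ?_
    congr 1
    have hs2 : ((Real.sqrt 3 / 2 : ℝ) : ℂ) ^ 2 = 3 / 4 := by
      have : ((Real.sqrt 3 / 2 : ℝ) : ℂ) = ((Real.sqrt 3 : ℝ) : ℂ) / 2 := by push_cast; ring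
      rw [this]; rw [div_pow, hs]; norm_num
    have hq : (z₀ - r₁) * (z₀ - r₂) = z₀ ^ 2 + z₀ + 1 := by
      rw [hr₁, hr₂]
      linear_combination (-Complex.I ^ 2) * hs2 + (-(3:ℂ)/4) * Complex.I_sq
    linear_combination (-20 * z₀ ^ 4 * (1 + z₀) ^ 4) * hq
  rw [key, div_eq_zero_iff]
  have hgsq : (-1 - 4 * z₀ - 6 * z₀ ^ 2 - 4 * z₀ ^ 3 + ((1:ℂ) - 1) * z₀ ^ 4) ^ 2 ≠ 0 :=
    pow_ne_zero 2 hg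
  constructor
  · rintro (h | h)
    · rcases mul_eq_zero.mp h with h | h
      · rcases mul_eq_zero.mp h with h | h
        · rcases mul_eq_zero.mp h with h | h
          · exact absurd h (by norm_num)
          · exact absurd h (pow_ne_zero 4 hz₀)
        · left
          have := pow_eq_zero_iff (n := 4) (by norm_num) |>.mp h
          linear_combination this
      · rcases mul_eq_zero.mp h with h | h
        · right; left; linear_combination h
        · right; right; linear_combination h
    · exact absurd h hgsq
  · rintro (rfl | rfl | rfl)
    · left; ring
    · left; ring
    · left; ring
end

section
/- For λ = 16, the set of free critical points of O_p(·,16) is {−1, 1, −1/3 + (2√2/3)·i, −1/3 − (2√2/3)·i}: for z₀ ∈ ℂ with z₀ ≠ 0 and 1 + 4z₀ + 6z₀² + 4z₀³ − 15z₀⁴ ≠ 0, the complex derivative of z ↦ O_p(z,16) at z₀ equals 0 if and only if z₀ ∈ {−1, 1, −1/3 + (2√2/3)·i, −1/3 − (2√2/3)·i}. -/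
/-- For `λ = 16`, the free critical points of `O_p(·,16)` are
`−1`, `1`, `−1/3 + (2√2/3)i` and `−1/3 − (2√2/3)i`. -/
theorem free_critical_points_lam_sixteen (z₀ : ℂ) (hz₀ : z₀ ≠ 0)
    (hden : 1 + 4 * z₀ + 6 * z₀ ^ 2 + 4 * z₀ ^ 3 - 15 * z₀ ^ 4 ≠ 0) :
    deriv (fun z => Op 16 z) z₀ = 0 ↔
      z₀ = -1 ∨ z₀ = 1 ∨
        z₀ = -(1 / 3) + ((2 * Real.sqrt 2 / 3 : ℝ) : ℂ) * Complex.I ∨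
        z₀ = -(1 / 3) - ((2 * Real.sqrt 2 / 3 : ℝ) : ℂ) * Complex.I := by
  -- the square root of two
  set s : ℂ := ((Real.sqrt 2 : ℝ) : ℂ) with hs_def
  have hs : s ^ 2 = 2 := by
    rw [hs_def, ← Complex.ofReal_pow, Real.sq_sqrt (by norm_num : (2:ℝ) ≥ 0)]
    norm_num
  have hcast : ((2 * Real.sqrt 2 / 3 : ℝ) : ℂ) = 2 * s / 3 := by
    rw [hs_def]; push_cast; ring
  -- denominator is nonzero
  have hgne : (-1 - 4 * z₀ - 6 * z₀ ^ 2 - 4 * z₀ ^ 3 + ((16:ℂ) - 1) * z₀ ^ 4) ≠ 0 := by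
    intro h
    apply hden
    linear_combination -h
  -- derivative of the numerator's first factor
  have hA : HasDerivAt (fun z : ℂ => -z ^ 4) (-(4 * z₀ ^ 3)) z₀ := by
    exact (hasDerivAt_pow 4 z₀).neg.congr_deriv (by norm_num)
  -- derivative of the numerator's second factor
  have hB : HasDerivAt
      (fun z : ℂ => (1 - 16) + 4 * z + 6 * z ^ 2 + 4 * z ^ 3 + z ^ 4)
      (4 + 12 * z₀ + 12 * z₀ ^ 2 + 4 * z₀ ^ 3) z₀ := by
    have h := ((((hasDerivAt_const z₀ ((1:ℂ) - 16)).add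
      ((hasDerivAt_id z₀).const_mul 4)).add
      ((hasDerivAt_pow 2 z₀).const_mul 6)).add
      ((hasDerivAt_pow 3 z₀).const_mul 4)).add (hasDerivAt_pow 4 z₀)
    exact h.congr_deriv (by push_cast; ring)
  -- derivative of the denominator
  have hg : HasDerivAt
      (fun z : ℂ => -1 - 4 * z - 6 * z ^ 2 - 4 * z ^ 3 + ((16:ℂ) - 1) * z ^ 4)
      (-4 - 12 * z₀ - 12 * z₀ ^ 2 + 60 * z₀ ^ 3) z₀ := by
    have h := ((((hasDerivAt_const z₀ (-1 : ℂ)).sub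
      ((hasDerivAt_id z₀).const_mul 4)).sub
      ((hasDerivAt_pow 2 z₀).const_mul 6)).sub
      ((hasDerivAt_pow 3 z₀).const_mul 4)).add
      ((hasDerivAt_pow 4 z₀).const_mul ((16:ℂ) - 1))
    exact h.congr_deriv (by push_cast; ring)
  have hDiv := (hA.mul hB).div hg hgne
  have hder : deriv (fun z => Op 16 z) z₀ =
      ((-(4 * z₀ ^ 3) * ((1 - 16) + 4 * z₀ + 6 * z₀ ^ 2 + 4 * z₀ ^ 3 + z₀ ^ 4) +
          (-z₀ ^ 4) * (4 + 12 * z₀ + 12 * z₀ ^ 2 + 4 * z₀ ^ 3)) *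
          (-1 - 4 * z₀ - 6 * z₀ ^ 2 - 4 * z₀ ^ 3 + ((16:ℂ) - 1) * z₀ ^ 4) -
        (-z₀ ^ 4 * ((1 - 16) + 4 * z₀ + 6 * z₀ ^ 2 + 4 * z₀ ^ 3 + z₀ ^ 4)) *
          (-4 - 12 * z₀ - 12 * z₀ ^ 2 + 60 * z₀ ^ 3)) /
        (-1 - 4 * z₀ - 6 * z₀ ^ 2 - 4 * z₀ ^ 3 + ((16:ℂ) - 1) * z₀ ^ 4) ^ 2 :=
    hDiv.deriv
  rw [hder, hcast, div_eq_zero_iff, or_iff_left (pow_ne_zero 2 hgne)]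
  -- abbreviations for the two complex roots
  set a : ℂ := -(1 / 3) + 2 * s / 3 * Complex.I with ha_def
  set b : ℂ := -(1 / 3) - 2 * s / 3 * Complex.I with hb_def
  have hqa : 3 * a ^ 2 + 2 * a + 3 = 0 := by
    rw [ha_def]
    linear_combination (4 / 3 : ℂ) * Complex.I ^ 2 * hs + (8 / 3 : ℂ) * Complex.I_sq
  have hqb : 3 * b ^ 2 + 2 * b + 3 = 0 := by
    rw [hb_def]
    linear_combination (4 / 3 : ℂ) * Complex.I ^ 2 * hs + (8 / 3 : ℂ) * Complex.I_sq
  constructor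
  · intro h
    -- factored form of the numerator
    have hfac : z₀ ^ 3 * ((z₀ - 1) ^ 2 * ((z₀ + 1) ^ 4 * ((z₀ - a) * (z₀ - b)))) = 0 := by
      have hq : 3 * (z₀ - a) * (z₀ - b) = 3 * z₀ ^ 2 + 2 * z₀ + 3 := by
        rw [ha_def, hb_def]
        linear_combination (-(4 / 3 : ℂ) * Complex.I ^ 2) * hs + (-(8 / 3 : ℂ)) * Complex.I_sq
      linear_combination (-(1:ℂ) / 60) * h +
        ((1:ℂ) / 3) * (z₀ ^ 3 * (z₀ - 1) ^ 2 * (z₀ + 1) ^ 4) * hq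
    rcases mul_eq_zero.mp hfac with h1 | h1
    · exact absurd ((pow_eq_zero_iff (by norm_num : (3:ℕ) ≠ 0)).mp h1) hz₀
    rcases mul_eq_zero.mp h1 with h2 | h2
    · refine Or.inr (Or.inl ?_)
      have h2' := (pow_eq_zero_iff (by norm_num : (2:ℕ) ≠ 0)).mp h2
      linear_combination h2'
    rcases mul_eq_zero.mp h2 with h3 | h3
    · refine Or.inl ?_
      have h3' := (pow_eq_zero_iff (by norm_num : (4:ℕ) ≠ 0)).mp h3
      linear_combination h3'
    rcases mul_eq_zero.mp h3 with h4 | h4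
    · exact Or.inr (Or.inr (Or.inl (sub_eq_zero.mp h4)))
    · exact Or.inr (Or.inr (Or.inr (sub_eq_zero.mp h4)))
  · rintro (rfl | rfl | rfl | rfl)
    · ring
    · ring
    · linear_combination (-20 * a ^ 3 * (a - 1) ^ 2 * (a + 1) ^ 4) * hqa
    · linear_combination (-20 * b ^ 3 * (b - 1) ^ 2 * (b + 1) ^ 4) * hqb
end

section
/- For λ = −4, the set of free critical points of O_p(·,−4) is {−1, i, −i}: for z₀ ∈ ℂ with z₀ ≠ 0 and 1 + 4z₀ + 6z₀² + 4z₀³ + 5z₀⁴ ≠ 0, the complex derivative of z ↦ O_p(z,−4) at z₀ equals 0 if and only if z₀ ∈ {−1, i, −i}. Moreover, the critical polynomial factors as −(1+z)⁴ − 4(1 − z + z² − z³ + z⁴) = −5(z² + 1)². -/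
private lemma hasDerivAt_num (z₀ : ℂ) :
    HasDerivAt (fun z : ℂ => -z ^ 4 * ((1 - (-4)) + 4 * z + 6 * z ^ 2 + 4 * z ^ 3 + z ^ 4))
      (-(4 * z₀ ^ 3) * ((1 - (-4)) + 4 * z₀ + 6 * z₀ ^ 2 + 4 * z₀ ^ 3 + z₀ ^ 4)
        + (-z₀ ^ 4) * (4 + 6 * (2 * z₀) + 4 * (3 * z₀ ^ 2) + 4 * z₀ ^ 3)) z₀ := by
  have hz : HasDerivAt (fun z : ℂ => z) 1 z₀ := hasDerivAt_id z₀
  have h4 : HasDerivAt (fun z : ℂ => z ^ 4) (4 * z₀ ^ 3) z₀ := by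
    simpa using hasDerivAt_pow 4 z₀
  have h3 : HasDerivAt (fun z : ℂ => z ^ 3) (3 * z₀ ^ 2) z₀ := by
    simpa using hasDerivAt_pow 3 z₀
  have h2 : HasDerivAt (fun z : ℂ => z ^ 2) (2 * z₀) z₀ := by
    simpa using hasDerivAt_pow 2 z₀
  have hq : HasDerivAt (fun z : ℂ => (1 - (-4)) + 4 * z + 6 * z ^ 2 + 4 * z ^ 3 + z ^ 4)
      (4 * 1 + 6 * (2 * z₀) + 4 * (3 * z₀ ^ 2) + 4 * z₀ ^ 3) z₀ := by
    have := ((((hasDerivAt_const z₀ ((1 : ℂ) - (-4))).add (hz.const_mul 4)).add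
      (h2.const_mul 6)).add (h3.const_mul 4)).add h4
    exact this.congr_deriv (by ring)
  have := h4.neg.mul hq
  exact this.congr_deriv (by simp only [Pi.neg_apply]; ring)

private lemma hasDerivAt_den (z₀ : ℂ) :
    HasDerivAt (fun z : ℂ => -1 - 4 * z - 6 * z ^ 2 - 4 * z ^ 3 + ((-4 : ℂ) - 1) * z ^ 4)
      (-(4 : ℂ) - 6 * (2 * z₀) - 4 * (3 * z₀ ^ 2) + (-4 - 1) * (4 * z₀ ^ 3)) z₀ := by
  have hz : HasDerivAt (fun z : ℂ => z) 1 z₀ := hasDerivAt_id z₀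
  have h4 : HasDerivAt (fun z : ℂ => z ^ 4) (4 * z₀ ^ 3) z₀ := by
    simpa using hasDerivAt_pow 4 z₀
  have h3 : HasDerivAt (fun z : ℂ => z ^ 3) (3 * z₀ ^ 2) z₀ := by
    simpa using hasDerivAt_pow 3 z₀
  have h2 : HasDerivAt (fun z : ℂ => z ^ 2) (2 * z₀) z₀ := by
    simpa using hasDerivAt_pow 2 z₀
  have := ((((hasDerivAt_const z₀ (-1 : ℂ)).sub (hz.const_mul 4)).sub
    (h2.const_mul 6)).sub (h3.const_mul 4)).add (h4.const_mul ((-4 : ℂ) - 1))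
  exact this.congr_deriv (by ring)

/-- For `λ = −4`, the free critical points of `O_p(·,−4)` are `−1`, `i`, `−i`;
moreover the critical polynomial factors as `−5(z²+1)²`. -/
theorem free_critical_points_lam_neg_four :
    (∀ z₀ : ℂ, z₀ ≠ 0 →
      1 + 4 * z₀ + 6 * z₀ ^ 2 + 4 * z₀ ^ 3 + 5 * z₀ ^ 4 ≠ 0 →
      (deriv (fun z => Op (-4) z) z₀ = 0 ↔
        z₀ = -1 ∨ z₀ = Complex.I ∨ z₀ = -Complex.I)) ∧
    (∀ z : ℂ, -(1 + z) ^ 4 - 4 * (1 - z + z ^ 2 - z ^ 3 + z ^ 4) =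
      -5 * (z ^ 2 + 1) ^ 2) := by
  constructor
  · intro z₀ hz0 hden
    have hg : (-1 - 4 * z₀ - 6 * z₀ ^ 2 - 4 * z₀ ^ 3 + ((-4 : ℂ) - 1) * z₀ ^ 4) ≠ 0 := by
      intro h
      apply hden
      linear_combination -h
    have hN := hasDerivAt_num z₀
    have hD := hasDerivAt_den z₀
    have hdiv := hN.div hD hg
    have heq : deriv (fun z => Op (-4) z) z₀ =
        ((-(4 * z₀ ^ 3) * ((1 - (-4)) + 4 * z₀ + 6 * z₀ ^ 2 + 4 * z₀ ^ 3 + z₀ ^ 4)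
          + (-z₀ ^ 4) * (4 + 6 * (2 * z₀) + 4 * (3 * z₀ ^ 2) + 4 * z₀ ^ 3))
          * (-1 - 4 * z₀ - 6 * z₀ ^ 2 - 4 * z₀ ^ 3 + ((-4 : ℂ) - 1) * z₀ ^ 4)
          - (-z₀ ^ 4 * ((1 - (-4)) + 4 * z₀ + 6 * z₀ ^ 2 + 4 * z₀ ^ 3 + z₀ ^ 4))
          * (-(4 : ℂ) - 6 * (2 * z₀) - 4 * (3 * z₀ ^ 2) + (-4 - 1) * (4 * z₀ ^ 3)))
          / (-1 - 4 * z₀ - 6 * z₀ ^ 2 - 4 * z₀ ^ 3 + ((-4 : ℂ) - 1) * z₀ ^ 4) ^ 2 := by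
      have : (fun z => Op (-4) z) = fun z : ℂ =>
          (-z ^ 4 * ((1 - (-4)) + 4 * z + 6 * z ^ 2 + 4 * z ^ 3 + z ^ 4)) /
            (-1 - 4 * z - 6 * z ^ 2 - 4 * z ^ 3 + ((-4 : ℂ) - 1) * z ^ 4) := by
        funext z; simp [Op]
      rw [this]
      exact hdiv.deriv
    rw [heq]
    rw [div_eq_zero_iff]
    have hg2 : (-1 - 4 * z₀ - 6 * z₀ ^ 2 - 4 * z₀ ^ 3 + ((-4 : ℂ) - 1) * z₀ ^ 4) ^ 2 ≠ 0 :=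
      pow_ne_zero 2 hg
    have hfac : (-(4 * z₀ ^ 3) * ((1 - (-4)) + 4 * z₀ + 6 * z₀ ^ 2 + 4 * z₀ ^ 3 + z₀ ^ 4)
          + (-z₀ ^ 4) * (4 + 6 * (2 * z₀) + 4 * (3 * z₀ ^ 2) + 4 * z₀ ^ 3))
          * (-1 - 4 * z₀ - 6 * z₀ ^ 2 - 4 * z₀ ^ 3 + ((-4 : ℂ) - 1) * z₀ ^ 4)
          - (-z₀ ^ 4 * ((1 - (-4)) + 4 * z₀ + 6 * z₀ ^ 2 + 4 * z₀ ^ 3 + z₀ ^ 4))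
          * (-(4 : ℂ) - 6 * (2 * z₀) - 4 * (3 * z₀ ^ 2) + (-4 - 1) * (4 * z₀ ^ 3))
        = 20 * z₀ ^ 3 * (z₀ + 1) ^ 4 * ((z₀ - Complex.I) * (z₀ + Complex.I)) ^ 2 := by
      have hII : (z₀ - Complex.I) * (z₀ + Complex.I) = z₀ ^ 2 + 1 := by
        linear_combination (-1 : ℂ) * Complex.I_sq
      rw [hII]
      ring
    rw [hfac]
    constructor
    · rintro (h | h)
      · rcases mul_eq_zero.mp h with h1 | hsq
        · rcases mul_eq_zero.mp h1 with h2 | h4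
          · rcases mul_eq_zero.mp h2 with h3 | h3
            · norm_num at h3
            · exact absurd ((pow_eq_zero_iff (by norm_num)).mp h3) hz0
          · left
            have h5 := (pow_eq_zero_iff (n := 4) (by norm_num)).mp h4
            linear_combination h5
        · have h5 := (pow_eq_zero_iff (n := 2) (by norm_num)).mp hsq
          rcases mul_eq_zero.mp h5 with h6 | h6
          · right; left; linear_combination h6
          · right; right; linear_combination h6
      · exact absurd h hg2
    · rintro (h | h | h) <;> (left; rw [h]; ring)
  · intro z; ring
end

section
/- The fixed points of O_p(·,λ) in ℂ are z = 0, z = 1 (when λ ≠ 16), and the six roots of a degree-six polynomial: for every λ ∈ ℂ and every z ∈ ℂ with −1 − 4z − 6z² − 4z³ + (λ−1)z⁴ ≠ 0, one has O_p(z,λ) = z if and only if z·(z − 1)·(z⁶ + 5z⁵ + 11z⁴ + (λ+14)z³ + 11z² + 5z + 1) = 0. -/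
/-- The fixed points of `O_p(·,λ)` in `ℂ` are `z = 0`, `z = 1` and the roots of
a degree-six polynomial. -/
theorem fixed_points_Op (lam z : ℂ)
    (hden : -1 - 4 * z - 6 * z ^ 2 - 4 * z ^ 3 + (lam - 1) * z ^ 4 ≠ 0) :
    Op lam z = z ↔
      z * (z - 1) *
        (z ^ 6 + 5 * z ^ 5 + 11 * z ^ 4 + (lam + 14) * z ^ 3 +
          11 * z ^ 2 + 5 * z + 1) = 0 := by
  rw [Op, div_eq_iff hden]
  constructor
  · intro h; linear_combination -h
  · intro h; linear_combination -h
end
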